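/- With V(q) = C[2(q₁² − q₂²) + a] and W(q) = C[1 + 2(q₁² + q₂²)], the function G = ½(p₁² + q₁² + p₂² + q₂²) + (p₁q₂ + p₂q₁)² + W(q) is a first integral of the Hamiltonian H = ½(p₁² + q₁²) − ½(p₂² + q₂²) + V(q), i.e. {H, G} = 0. -/

import Mathlib

/-- Canonical Poisson bracket of two functions on `ℝ⁴` with coordinates
`(q₁, q₂, p₁, p₂) = (x 0, x 1, x 2, x 3)`. -/
noncomputable def poissonBracket (F G : (Fin 4 → ℝ) → ℝ) (x : Fin 4 → ℝ) : ℝ :=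
  fderiv ℝ F x (Pi.single 0 1) * fderiv ℝ G x (Pi.single 2 1)
    + fderiv ℝ F x (Pi.single 1 1) * fderiv ℝ G x (Pi.single 3 1)
    - fderiv ℝ F x (Pi.single 2 1) * fderiv ℝ G x (Pi.single 0 1)
    - fderiv ℝ F x (Pi.single 3 1) * fderiv ℝ G x (Pi.single 1 1)

/-- Case II of the internally interacting double oscillator: with
`V = C[2(q₁²−q₂²)+a]` and `W = C[1+2(q₁²+q₂²)]`, the function
`G = ½(p₁²+q₁²+p₂²+q₂²) + (p₁q₂+p₂q₁)² + W` is a first integral of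
`H = ½(p₁²+q₁²) − ½(p₂²+q₂²) + V`. -/
theorem case_II_first_integral (C a : ℝ) :
    ∀ x : Fin 4 → ℝ,
      poissonBracket
        (fun x => (x 2 ^ 2 + x 0 ^ 2) / 2 - (x 3 ^ 2 + x 1 ^ 2) / 2
          + C * (2 * (x 0 ^ 2 - x 1 ^ 2) + a))
        (fun x => (x 2 ^ 2 + x 0 ^ 2 + x 3 ^ 2 + x 1 ^ 2) / 2
          + (x 2 * x 1 + x 3 * x 0) ^ 2
          + C * (1 + 2 * (x 0 ^ 2 + x 1 ^ 2))) x = 0 := by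
  intro x
  have P : ∀ i : Fin 4, HasFDerivAt (fun x : Fin 4 → ℝ => x i)
      (ContinuousLinearMap.proj i : (Fin 4 → ℝ) →L[ℝ] ℝ) x :=
    fun i => (ContinuousLinearMap.proj i : (Fin 4 → ℝ) →L[ℝ] ℝ).hasFDerivAt
  have Q : ∀ i : Fin 4, HasFDerivAt (fun x : Fin 4 → ℝ => x i ^ 2)
      ((↑2 * x i ^ 1) • (ContinuousLinearMap.proj i : (Fin 4 → ℝ) →L[ℝ] ℝ)) x :=
    fun i => by have := (hasDerivAt_pow 2 (x i)).comp_hasFDerivAt x (P i); exact this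
  have hcross := (hasDerivAt_pow 2 (x 2 * x 1 + x 3 * x 0)).comp_hasFDerivAt x
    (((P 2).mul (P 1)).add ((P 3).mul (P 0)))
  have hH := ((((Q 2).add (Q 0)).mul_const ((2:ℝ)⁻¹)).sub
      (((Q 3).add (Q 1)).mul_const ((2:ℝ)⁻¹))).add
      (((((Q 0).sub (Q 1)).const_mul 2).add_const a).const_mul C)
  have hG := ((((((Q 2).add (Q 0)).add (Q 3)).add
      (Q 1)).mul_const ((2:ℝ)⁻¹)).add
      hcross).add
      (((((Q 0).add (Q 1)).const_mul 2).const_add 1).const_mul C)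
  have hH' : HasFDerivAt (fun x : Fin 4 → ℝ => (x 2 ^ 2 + x 0 ^ 2) / 2 - (x 3 ^ 2 + x 1 ^ 2) / 2
      + C * (2 * (x 0 ^ 2 - x 1 ^ 2) + a)) _ x := hH
  have hG' : HasFDerivAt (fun x : Fin 4 → ℝ => (x 2 ^ 2 + x 0 ^ 2 + x 3 ^ 2 + x 1 ^ 2) / 2
      + (x 2 * x 1 + x 3 * x 0) ^ 2 + C * (1 + 2 * (x 0 ^ 2 + x 1 ^ 2))) _ x := hG
  simp only [poissonBracket, hH'.fderiv, hG'.fderiv]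
  simp [ContinuousLinearMap.add_apply, ContinuousLinearMap.sub_apply,
    ContinuousLinearMap.smul_apply, ContinuousLinearMap.proj_apply,
    Pi.single_apply]
  ring
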